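/- In the Hahn series field F = HahnSeries ℝ ℝ, for a ∈ F⁺ = {x : x ≠ 0, 0 < leadingCoeff x} and γ ∈ ℝ, the element a / π (vv a) belongs to U⁺, so the tempered power tp a γ = π ((vv a) ^ γ) · (a / π (vv a))^{single 0 γ} is well defined (here (vv a)^γ is the real power Real.rpow, noting 0 < vv a). For all a, b ∈ F⁺ and γ ∈ ℝ: tp (a·b) γ = (tp a γ) · (tp b γ) and vv (tp a γ) = (vv a) ^ γ. -/

import Mathlib

open HahnSeries

/-- The exponential summable family `n ↦ (n!)⁻¹ • bⁿ` of an element `b` of positive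
order in the Hahn series field. -/
noncomputable def expFamily (b : HahnSeries ℝ ℝ) (hb : 0 < b.orderTop) :
    SummableFamily ℝ ℝ ℕ where
  toFun n := ((n.factorial : ℝ))⁻¹ • b ^ n
  isPWO_iUnion_support' := by
    refine (SummableFamily.powers b).isPWO_iUnion_support.mono ?_
    intro g hg
    obtain ⟨n, hn⟩ := Set.mem_iUnion.mp hg
    refine Set.mem_iUnion.mpr ⟨n, ?_⟩
    have hn' : (((n.factorial : ℝ))⁻¹ • b ^ n).coeff g ≠ 0 := hn
    have hbn : (b ^ n).coeff g ≠ 0 := fun h => hn' (by rw [HahnSeries.coeff_smul, h, smul_zero])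
    rwa [SummableFamily.powers_of_orderTop_pos hb n]
  finite_co_support' g := by
    refine ((SummableFamily.powers b).finite_co_support g).subset ?_
    intro n hn
    simp only [Set.mem_setOf_eq] at hn ⊢
    intro h
    apply hn
    rw [HahnSeries.coeff_smul]
    have h' : (b ^ n).coeff g = 0 := by
      simp only [] at h
      rwa [SummableFamily.powers_of_orderTop_pos hb n] at h
    rw [h', smul_zero]

/-- The restricted exponential on the maximal ideal of the valuation ring:
`E b = ∑_{n} (n!)⁻¹ bⁿ` when `0 < orderTop b`, and (junk value) `0` otherwise. -/
noncomputable def E (b : HahnSeries ℝ ℝ) : HahnSeries ℝ ℝ :=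
  if hb : 0 < b.orderTop then (expFamily b hb).hsum else 0

/-- The exponential on the valuation ring `O = {x : 0 ≤ orderTop x}`, combining the
real exponential on the constant term with the restricted exponential `E`. -/
noncomputable def expO (a : HahnSeries ℝ ℝ) : HahnSeries ℝ ℝ :=
  HahnSeries.single (0 : ℝ) (Real.exp (a.coeff 0)) *
    E (a - HahnSeries.single (0 : ℝ) (a.coeff 0))

/-- The logarithm on positive units: the inverse of the bijection `expO : O → U⁺`. -/
noncomputable def logO (x : HahnSeries ℝ ℝ) : HahnSeries ℝ ℝ :=
  Function.invFunOn expO {a : HahnSeries ℝ ℝ | 0 ≤ a.orderTop} x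

/-- The power `b ^ c = expO (c · logO b)` for `b ∈ U⁺` and `c ∈ O`. -/
noncomputable def hpow (b c : HahnSeries ℝ ℝ) : HahnSeries ℝ ℝ :=
  expO (c * logO b)

/-- Membership in the group `U⁺` of positive units of the valuation ring. -/
def memUplus (x : HahnSeries ℝ ℝ) : Prop :=
  x ≠ 0 ∧ x.order = 0 ∧ 0 < x.leadingCoeff

/-- The signed valuation on the Hahn series field `HahnSeries ℝ ℝ`. -/
noncomputable def vv (x : HahnSeries ℝ ℝ) : ℝ :=
  Real.sign x.leadingCoeff * Real.exp (-x.order)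

/-- The diagonal cross-section `π : ℝ^× → HahnSeries ℝ ℝ`. -/
noncomputable def diagPi (a : ℝ) : HahnSeries ℝ ℝ :=
  HahnSeries.single (-Real.log |a|) a

/-- The tempered power `a^γ = π((vv a)^γ) · (a / π(vv a))^{single 0 γ}`, for `a ∈ F⁺`
and `γ ∈ ℝ`, where `(vv a)^γ` is the real power `Real.rpow`. -/
noncomputable def tp (a : HahnSeries ℝ ℝ) (γ : ℝ) : HahnSeries ℝ ℝ :=
  diagPi ((vv a) ^ γ) * hpow (a / diagPi (vv a)) (HahnSeries.single (0 : ℝ) γ)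


open HahnSeries

noncomputable abbrev F := HahnSeries ℝ ℝ

lemma coeff_sum {ι : Type*} (s : Finset ι) (f : ι → F) (g : ℝ) :
    (∑ i ∈ s, f i).coeff g = ∑ i ∈ s, (f i).coeff g := by
  classical
  induction s using Finset.induction_on with
  | empty => simp
  | insert _ _ h ih => simp [Finset.sum_insert h, ih]

lemma orderTop_pos_iff {x : F} : 0 < x.orderTop ↔ ∀ g ≤ 0, x.coeff g = 0 := by
  constructor
  · intro h g hg
    exact HahnSeries.coeff_eq_zero_of_lt_orderTop (lt_of_le_of_lt (by exact_mod_cast hg) h)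
  · intro h
    by_cases hx : x = 0
    · simp [hx]
    · rw [← HahnSeries.order_eq_orderTop_of_ne_zero hx]
      have hne : x.coeff x.order ≠ 0 := by
        rw [← HahnSeries.leadingCoeff_eq]
        exact HahnSeries.leadingCoeff_ne_zero.mpr hx
      by_contra hc
      push_neg at hc
      have : x.order ≤ 0 := by exact_mod_cast hc
      exact hne (h _ this)

lemma orderTop_nonneg_iff {x : F} : 0 ≤ x.orderTop ↔ ∀ g < 0, x.coeff g = 0 := by
  constructor
  · intro h g hg
    exact HahnSeries.coeff_eq_zero_of_lt_orderTop (lt_of_lt_of_le (by exact_mod_cast hg) h)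
  · intro h
    by_cases hx : x = 0
    · simp [hx]
    · rw [← HahnSeries.order_eq_orderTop_of_ne_zero hx]
      have hne : x.coeff x.order ≠ 0 := by
        rw [← HahnSeries.leadingCoeff_eq]
        exact HahnSeries.leadingCoeff_ne_zero.mpr hx
      by_contra hc
      push_neg at hc
      have : x.order < 0 := by exact_mod_cast hc
      exact hne (h _ this)

lemma coeff_ne_zero_pos {x : F} (hx : 0 < x.orderTop) {g : ℝ} (hg : x.coeff g ≠ 0) : 0 < g := by
  by_contra hc
  push_neg at hc
  exact hg (orderTop_pos_iff.mp hx g hc)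

lemma coeff_ne_zero_nonneg {x : F} (hx : 0 ≤ x.orderTop) {g : ℝ} (hg : x.coeff g ≠ 0) : 0 ≤ g := by
  by_contra hc
  push_neg at hc
  exact hg (orderTop_nonneg_iff.mp hx g hc)

lemma orderTop_pos_mul {x y : F} (hx : 0 < x.orderTop) (hy : 0 ≤ y.orderTop) :
    0 < (x * y).orderTop := by
  rw [orderTop_pos_iff]
  intro g hg
  rw [HahnSeries.coeff_mul]
  refine Finset.sum_eq_zero fun ij hij => ?_
  rw [Finset.mem_addAntidiagonal] at hij
  obtain ⟨h1, h2, h3⟩ := hij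
  exfalso
  have p1 : 0 < ij.1 := coeff_ne_zero_pos hx h1
  have p2 : 0 ≤ ij.2 := coeff_ne_zero_nonneg hy h2
  linarith [h3, hg]

lemma orderTop_nonneg_mul {x y : F} (hx : 0 ≤ x.orderTop) (hy : 0 ≤ y.orderTop) :
    0 ≤ (x * y).orderTop := by
  rw [orderTop_nonneg_iff]
  intro g hg
  rw [HahnSeries.coeff_mul]
  refine Finset.sum_eq_zero fun ij hij => ?_
  rw [Finset.mem_addAntidiagonal] at hij
  obtain ⟨h1, h2, h3⟩ := hij
  exfalso
  have p1 : 0 ≤ ij.1 := coeff_ne_zero_nonneg hx h1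
  have p2 : 0 ≤ ij.2 := coeff_ne_zero_nonneg hy h2
  linarith [h3, hg]

lemma orderTop_nonneg_pow {x : F} (hx : 0 ≤ x.orderTop) (n : ℕ) : 0 ≤ (x ^ n).orderTop := by
  induction n with
  | zero => simp [pow_zero]
  | succ n ih => rw [pow_succ]; exact orderTop_nonneg_mul ih hx

lemma orderTop_pos_pow {x : F} (hx : 0 < x.orderTop) {n : ℕ} (hn : 1 ≤ n) :
    0 < (x ^ n).orderTop := by
  obtain ⟨m, rfl⟩ := Nat.exists_eq_add_of_le hn
  rw [_root_.pow_add, pow_one]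
  exact orderTop_pos_mul hx (orderTop_nonneg_pow (le_of_lt hx) m)

section Sec2

lemma expFamily_apply (b : F) (hb : 0 < b.orderTop) (n : ℕ) :
    expFamily b hb n = ((n.factorial : ℝ))⁻¹ • b ^ n := rfl

lemma E_eq (b : F) (hb : 0 < b.orderTop) : E b = (expFamily b hb).hsum := dif_pos hb

lemma E_coeff (b : F) (hb : 0 < b.orderTop) (g : ℝ) :
    (E b).coeff g = ∑ᶠ n : ℕ, ((n.factorial : ℝ))⁻¹ * (b ^ n).coeff g := by
  rw [E_eq b hb, SummableFamily.coeff_hsum]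
  refine finsum_congr fun n => ?_
  rw [expFamily_apply, HahnSeries.coeff_smul, smul_eq_mul]

lemma E_coeff_nonpos (b : F) (hb : 0 < b.orderTop) {g : ℝ} (hg : g ≤ 0) :
    (E b).coeff g = (1 : F).coeff g := by
  rw [E_coeff b hb]
  rw [finsum_eq_single _ 0 (fun n hn => ?_)]
  · simp [pow_zero]
  · have h1 : 1 ≤ n := Nat.one_le_iff_ne_zero.mpr hn
    rw [orderTop_pos_iff.mp (orderTop_pos_pow hb h1) g hg, mul_zero]

lemma E_coeff_zero (b : F) (hb : 0 < b.orderTop) : (E b).coeff 0 = 1 := by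
  rw [E_coeff_nonpos b hb le_rfl]
  simp

lemma E_coeff_neg (b : F) (hb : 0 < b.orderTop) {g : ℝ} (hg : g < 0) : (E b).coeff g = 0 := by
  rw [E_coeff_nonpos b hb hg.le, HahnSeries.coeff_one, if_neg hg.ne]

lemma unit_struct {x : F} (h0 : x.coeff 0 ≠ 0) (hneg : ∀ g < 0, x.coeff g = 0) :
    x ≠ 0 ∧ x.order = 0 ∧ x.leadingCoeff = x.coeff 0 := by
  have hx : x ≠ 0 := fun h => h0 (by simp [h])
  have hle : x.order ≤ 0 := HahnSeries.order_le_of_coeff_ne_zero h0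
  have hco : x.coeff x.order ≠ 0 := by
    rw [← HahnSeries.leadingCoeff_eq]; exact HahnSeries.leadingCoeff_ne_zero.mpr hx
  have hge : 0 ≤ x.order := by
    by_contra hc; push_neg at hc; exact hco (hneg _ hc)
  have hord : x.order = 0 := le_antisymm hle hge
  exact ⟨hx, hord, by rw [HahnSeries.leadingCoeff_eq, hord]⟩

lemma E_struct (b : F) (hb : 0 < b.orderTop) :
    E b ≠ 0 ∧ (E b).order = 0 ∧ (E b).leadingCoeff = 1 := by
  have h := unit_struct (x := E b) (by rw [E_coeff_zero b hb]; exact one_ne_zero)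
    (fun g hg => E_coeff_neg b hb hg)
  exact ⟨h.1, h.2.1, by rw [h.2.2, E_coeff_zero b hb]⟩

lemma orderTop_pos_sub_one (b : F) (hb : 0 < b.orderTop) : 0 < (E b - 1).orderTop := by
  rw [orderTop_pos_iff]
  intro g hg
  rw [HahnSeries.coeff_sub, E_coeff_nonpos b hb hg, sub_self]

end Sec2

section Sec3
open HahnSeries.SummableFamily

lemma support_sum_subset {ι : Type*} (s : Finset ι) (f : ι → F) :
    (∑ i ∈ s, f i).support ⊆ ⋃ i ∈ s, (f i).support := by
  intro g hg
  rw [HahnSeries.mem_support, _root_.coeff_sum] at hg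
  obtain ⟨i, hi, hne⟩ := Finset.exists_ne_zero_of_sum_ne_zero hg
  exact Set.mem_biUnion hi hne

/-- Regrouping a summable family over `ℕ × ℕ` along the antidiagonals. -/
noncomputable def sumAntidiag (f : SummableFamily ℝ ℝ (ℕ × ℕ)) : SummableFamily ℝ ℝ ℕ where
  toFun n := ∑ p ∈ Finset.HasAntidiagonal.antidiagonal n, f p
  isPWO_iUnion_support' := by
    refine f.isPWO_iUnion_support.mono ?_
    intro g hg
    obtain ⟨n, hn⟩ := Set.mem_iUnion.mp hg
    obtain ⟨p, _, hp⟩ := Set.mem_iUnion₂.mp (support_sum_subset _ _ hn)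
    exact Set.mem_iUnion.mpr ⟨p, hp⟩
  finite_co_support' g := by
    refine (Set.Finite.image (fun p : ℕ × ℕ => p.1 + p.2) (f.finite_co_support g)).subset ?_
    intro n hn
    simp only [Set.mem_setOf_eq] at hn
    rw [_root_.coeff_sum] at hn
    obtain ⟨p, hp, hne⟩ := Finset.exists_ne_zero_of_sum_ne_zero hn
    exact ⟨p, hne, Finset.HasAntidiagonal.mem_antidiagonal.mp hp⟩

lemma sumAntidiag_apply (f : SummableFamily ℝ ℝ (ℕ × ℕ)) (n : ℕ) :
    sumAntidiag f n = ∑ p ∈ Finset.HasAntidiagonal.antidiagonal n, f p := rfl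

lemma hsum_sumAntidiag (f : SummableFamily ℝ ℝ (ℕ × ℕ)) :
    (sumAntidiag f).hsum = f.hsum := by
  classical
  ext g
  rw [SummableFamily.coeff_hsum, SummableFamily.coeff_hsum]
  set S : Finset (ℕ × ℕ) := (f.finite_co_support g).toFinset with hS
  have hSsupp : (Function.support fun p : ℕ × ℕ => (f p).coeff g) ⊆ ↑S := by
    intro p hp; exact (Set.Finite.mem_toFinset _).mpr hp
  set T : Finset ℕ := S.image (fun p : ℕ × ℕ => p.1 + p.2) with hT
  have hTsupp : (Function.support fun n : ℕ => ((sumAntidiag f) n).coeff g) ⊆ ↑T := by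
    intro n hn
    rw [Function.mem_support, sumAntidiag_apply, _root_.coeff_sum] at hn
    obtain ⟨p, hp, hne⟩ := Finset.exists_ne_zero_of_sum_ne_zero hn
    refine Finset.mem_coe.mpr (Finset.mem_image.mpr ⟨p, ?_, Finset.HasAntidiagonal.mem_antidiagonal.mp hp⟩)
    exact (Set.Finite.mem_toFinset _).mpr hne
  rw [finsum_eq_sum_of_support_subset _ hTsupp, finsum_eq_sum_of_support_subset _ hSsupp]
  have hdisj : (T : Set ℕ).PairwiseDisjoint (fun n => Finset.HasAntidiagonal.antidiagonal n) := by
    intro a _ b _ hab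
    simp only [Function.onFun, Finset.disjoint_left]
    intro p hp1 hp2
    exact hab ((Finset.HasAntidiagonal.mem_antidiagonal.mp hp1).symm.trans (Finset.HasAntidiagonal.mem_antidiagonal.mp hp2))
  calc ∑ n ∈ T, ((sumAntidiag f) n).coeff g
      = ∑ n ∈ T, ∑ p ∈ Finset.HasAntidiagonal.antidiagonal n, (f p).coeff g := by
        refine Finset.sum_congr rfl fun n _ => ?_
        rw [sumAntidiag_apply, _root_.coeff_sum]
    _ = ∑ p ∈ T.biUnion (fun n => Finset.HasAntidiagonal.antidiagonal n), (f p).coeff g :=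
        (Finset.sum_biUnion hdisj).symm
    _ = ∑ p ∈ S, (f p).coeff g := by
        refine (Finset.sum_subset_zero_on_sdiff ?_ ?_ ?_).symm
        · intro p hp
          refine Finset.mem_biUnion.mpr ⟨p.1 + p.2, ?_, Finset.HasAntidiagonal.mem_antidiagonal.mpr rfl⟩
          exact Finset.mem_image.mpr ⟨p, hp, rfl⟩
        · intro p hp
          rw [Finset.mem_sdiff] at hp
          by_contra hne
          exact hp.2 (by exact (Set.Finite.mem_toFinset _).mpr hne)
        · intro _ _; rfl

end Sec3

section Sec4
open HahnSeries.SummableFamily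

lemma factorial_inv_eq {n k : ℕ} (hk : k ≤ n) :
    ((n.factorial : ℝ))⁻¹ * (n.choose k : ℝ) =
      ((k.factorial : ℝ))⁻¹ * (((n - k).factorial : ℝ))⁻¹ := by
  have h := Nat.choose_mul_factorial_mul_factorial hk
  have h' : ((n.choose k : ℝ)) * (k.factorial : ℝ) * ((n - k).factorial : ℝ)
      = (n.factorial : ℝ) := by exact_mod_cast congrArg (Nat.cast (R := ℝ)) h
  have h1 : (k.factorial : ℝ) ≠ 0 := Nat.cast_ne_zero.mpr k.factorial_ne_zero
  have h2 : ((n - k).factorial : ℝ) ≠ 0 := Nat.cast_ne_zero.mpr (n - k).factorial_ne_zero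
  have h3 : (n.factorial : ℝ) ≠ 0 := Nat.cast_ne_zero.mpr n.factorial_ne_zero
  field_simp
  linarith [h']

lemma natCast_smul_hahn (c : ℕ) (z : F) : z * (c : F) = (c : ℝ) • z := by
  have h1 : ((c : ℕ) : F) = HahnSeries.single (0 : ℝ) ((c : ℕ) : ℝ) := by
    rw [show (HahnSeries.single (0 : ℝ) ((c : ℕ) : ℝ)) = HahnSeries.C ((c : ℕ) : ℝ) from rfl,
      map_natCast]
  rw [h1, mul_comm, HahnSeries.single_zero_mul_eq_smul]

lemma real_smul_eq (a : ℝ) (x : F) : a • x = HahnSeries.single (0 : ℝ) a * x :=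
  HahnSeries.single_zero_mul_eq_smul.symm

lemma smul_mul_smul' (a b : ℝ) (x y : F) : (a • x) * (b • y) = (a * b) • (x * y) := by
  rw [real_smul_eq a, real_smul_eq b, real_smul_eq (a * b), mul_mul_mul_comm,
    HahnSeries.single_mul_single, zero_add]

lemma E_mul {x y : F} (hx : 0 < x.orderTop) (hy : 0 < y.orderTop) :
    E x * E y = E (x + y) := by
  have hxy : 0 < (x + y).orderTop :=
    lt_of_lt_of_le (lt_min hx hy) HahnSeries.min_orderTop_le_orderTop_add
  have key : sumAntidiag (SummableFamily.smul (expFamily x hx) (expFamily y hy))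
      = expFamily (x + y) hxy := by
    apply SummableFamily.ext
    intro n
    rw [sumAntidiag_apply, expFamily_apply]
    have hterm : ∀ p ∈ Finset.HasAntidiagonal.antidiagonal n,
        (SummableFamily.smul (expFamily x hx) (expFamily y hy)) p
          = (((p.1.factorial : ℝ))⁻¹ * ((p.2.factorial : ℝ))⁻¹) • (x ^ p.1 * y ^ p.2) := by
      intro p _
      show (HahnModule.of ℝ).symm ((expFamily x hx p.1) • HahnModule.of ℝ (expFamily y hy p.2)) = _
      rw [HahnSeries.of_symm_smul_of_eq_mul, expFamily_apply, expFamily_apply,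
        smul_mul_smul']
    rw [Finset.sum_congr rfl hterm]
    rw [Finset.Nat.sum_antidiagonal_eq_sum_range_succ_mk]
    rw [add_pow, Finset.smul_sum]
    refine Finset.sum_congr rfl fun k hk => ?_
    have hkn : k ≤ n := Nat.lt_succ_iff.mp (Finset.mem_range.mp hk)
    rw [natCast_smul_hahn, smul_smul, factorial_inv_eq hkn]
  have h1 : E x * E y = (SummableFamily.smul (expFamily x hx) (expFamily y hy)).hsum := by
    rw [E_eq x hx, E_eq y hy, SummableFamily.smul_hsum, HahnSeries.of_symm_smul_of_eq_mul]
  rw [h1, ← hsum_sumAntidiag, key, ← E_eq]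

end Sec4

section Sec5

lemma orderTop_pos_sum {ι : Type*} (s : Finset ι) (f : ι → F)
    (h : ∀ i ∈ s, 0 < (f i).orderTop) : 0 < (∑ i ∈ s, f i).orderTop := by
  rw [orderTop_pos_iff]
  intro g hg
  rw [_root_.coeff_sum]
  exact Finset.sum_eq_zero fun i hi => orderTop_pos_iff.mp (h i hi) g hg

lemma E_inj {x y : F} (hx : 0 < x.orderTop) (hy : 0 < y.orderTop) (h : E x = E y) : x = y := by
  by_contra hne
  have hd : x - y ≠ 0 := sub_ne_zero_of_ne hne
  set o : ℝ := (x - y).order with ho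
  have hdo : (x - y).coeff o ≠ 0 := by
    rw [← HahnSeries.leadingCoeff_eq]; exact HahnSeries.leadingCoeff_ne_zero.mpr hd
  have hfin1 : (Function.support fun n : ℕ => ((n.factorial : ℝ))⁻¹ * (x ^ n).coeff o).Finite := by
    refine ((expFamily x hx).finite_co_support o).subset ?_
    intro n hn
    simp only [Function.mem_support] at hn
    simp only [Set.mem_setOf_eq, expFamily_apply, HahnSeries.coeff_smul, smul_eq_mul]
    exact hn
  have hfin2 : (Function.support fun n : ℕ => ((n.factorial : ℝ))⁻¹ * (y ^ n).coeff o).Finite := by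
    refine ((expFamily y hy).finite_co_support o).subset ?_
    intro n hn
    simp only [Function.mem_support] at hn
    simp only [Set.mem_setOf_eq, expFamily_apply, HahnSeries.coeff_smul, smul_eq_mul]
    exact hn
  have hsub : (E x).coeff o - (E y).coeff o
      = ∑ᶠ n : ℕ, (((n.factorial : ℝ))⁻¹ * (x ^ n).coeff o
          - ((n.factorial : ℝ))⁻¹ * (y ^ n).coeff o) := by
    rw [E_coeff x hx, E_coeff y hy, ← finsum_sub_distrib hfin1 hfin2]
  have hzero : ∀ n : ℕ, n ≠ 1 →
      ((n.factorial : ℝ))⁻¹ * (x ^ n).coeff o - ((n.factorial : ℝ))⁻¹ * (y ^ n).coeff o = 0 := by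
    intro n hn
    rcases Nat.eq_zero_or_pos n with h0 | hpos
    · subst h0; simp
    · have h2 : 2 ≤ n := by omega
      have hgeom : 0 < (∑ i ∈ Finset.range n, x ^ i * y ^ (n - 1 - i)).orderTop := by
        refine orderTop_pos_sum _ _ fun i hi => ?_
        rcases Nat.eq_zero_or_pos i with hi0 | hip
        · subst hi0
          rw [pow_zero, one_mul]
          exact orderTop_pos_pow hy (by omega)
        · exact orderTop_pos_mul (orderTop_pos_pow hx hip)
            (orderTop_nonneg_pow hy.le _)
      have hxyn : (x ^ n - y ^ n).coeff o = 0 := by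
        rw [← geom_sum₂_mul x y n]
        refine HahnSeries.coeff_eq_zero_of_lt_orderTop (lt_of_lt_of_le ?_
          (HahnSeries.orderTop_mul _ _).ge)
        have hdot : (x - y).orderTop = (o : WithTop ℝ) :=
          (HahnSeries.order_eq_orderTop_of_ne_zero hd).symm
        rw [hdot]
        calc (o : WithTop ℝ) = 0 + (o : WithTop ℝ) := by rw [zero_add]
          _ < _ := WithTop.add_lt_add_right WithTop.coe_ne_top hgeom
      rw [← mul_sub, ← HahnSeries.coeff_sub, hxyn, mul_zero]
  have : (E x).coeff o - (E y).coeff o = (x - y).coeff o := by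
    rw [hsub, finsum_eq_single _ 1 hzero]
    simp [HahnSeries.coeff_sub]
  rw [h, sub_self] at this
  exact hdo this.symm

end Sec5

section Sec6
open PowerSeries

/-- The formal logarithm `log(1+X)` as a real power series. -/
noncomputable def LP : PowerSeries ℝ := PowerSeries.mk fun n => (-1) ^ (n + 1) / n

lemma coeff_LP (n : ℕ) : (PowerSeries.coeff n) LP = (-1) ^ (n + 1) / n := coeff_mk n _

lemma constantCoeff_LP : PowerSeries.constantCoeff LP = 0 := by
  rw [← coeff_zero_eq_constantCoeff_apply, coeff_LP]
  simp

lemma coeff_LP_pow {m n : ℕ} (h : n < m) : (PowerSeries.coeff n) (LP ^ m) = 0 := by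
  have hX : (X : PowerSeries ℝ) ∣ LP := X_dvd_iff.mpr constantCoeff_LP
  have : (X : PowerSeries ℝ) ^ m ∣ LP ^ m := pow_dvd_pow_of_dvd hX m
  exact (X_pow_dvd_iff.mp this) n h

lemma coeff_dLP (n : ℕ) : (PowerSeries.coeff n) (d⁄dX ℝ LP) = (-1) ^ n := by
  rw [coeff_derivative, coeff_LP]
  have h : ((n : ℝ) + 1) ≠ 0 := by positivity
  field_simp
  push_cast
  ring

lemma one_add_X_mul_dLP : (1 + X : PowerSeries ℝ) * d⁄dX ℝ LP = 1 := by
  ext n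
  rw [add_mul, one_mul, map_add]
  cases n with
  | zero =>
    rw [coeff_zero_X_mul, coeff_dLP, PowerSeries.coeff_one]
    norm_num
  | succ n =>
    rw [coeff_succ_X_mul, coeff_dLP, coeff_dLP, PowerSeries.coeff_one]
    simp [pow_succ]

/-- Coefficients of the formal composite `exp(log(1+X))`. -/
noncomputable def aa (n : ℕ) : ℝ :=
  ∑ m ∈ Finset.range (n + 1), ((m.factorial : ℝ))⁻¹ * (PowerSeries.coeff n) (LP ^ m)

noncomputable def BB : PowerSeries ℝ := PowerSeries.mk aa

lemma coeff_BB (n : ℕ) : (PowerSeries.coeff n) BB = aa n := coeff_mk n _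

lemma aa_eq (n N : ℕ) (hN : n < N) :
    aa n = ∑ m ∈ Finset.range N, ((m.factorial : ℝ))⁻¹ * (PowerSeries.coeff n) (LP ^ m) := by
  refine Finset.sum_subset (by intro m hm; simp only [Finset.mem_range] at *; omega) ?_
  intro m hm hnm
  simp only [Finset.mem_range, not_lt] at hnm
  rw [coeff_LP_pow (by omega : n < m), mul_zero]

lemma derivative_BB : d⁄dX ℝ BB = BB * d⁄dX ℝ LP := by
  ext n
  rw [coeff_derivative, coeff_BB]
  have lhs : aa (n + 1) * ((n : ℝ) + 1)
      = ∑ m ∈ Finset.range (n + 2),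
          ((m.factorial : ℝ))⁻¹ * ((PowerSeries.coeff (n+1)) (LP ^ m) * ((n : ℝ) + 1)) := by
    rw [aa, Finset.sum_mul]
    refine Finset.sum_congr rfl fun m _ => by ring
  have hderiv : ∀ m : ℕ, (PowerSeries.coeff (n+1)) (LP ^ m) * ((n : ℝ) + 1)
      = (m : ℝ) * (PowerSeries.coeff n) (LP ^ (m - 1) * d⁄dX ℝ LP) := by
    intro m
    have h1 : d⁄dX ℝ (LP ^ m) = m • (LP ^ (m - 1) * d⁄dX ℝ LP) := by
      rw [Derivation.leibniz_pow]
      rfl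
    have h2 := coeff_derivative (LP ^ m) n
    rw [h1] at h2
    rw [← h2, map_nsmul, nsmul_eq_mul]
  rw [lhs]
  have step : ∑ m ∈ Finset.range (n + 2),
      ((m.factorial : ℝ))⁻¹ * ((PowerSeries.coeff (n+1)) (LP ^ m) * ((n : ℝ) + 1))
      = ∑ k ∈ Finset.range (n + 1),
          ((k.factorial : ℝ))⁻¹ * (PowerSeries.coeff n) (LP ^ k * d⁄dX ℝ LP) := by
    rw [Finset.sum_range_succ']
    simp only [hderiv]
    rw [Nat.cast_zero, zero_mul, mul_zero, add_zero]
    refine Finset.sum_congr rfl fun k _ => ?_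
    have : ((k + 1).factorial : ℝ)⁻¹ * ((k : ℝ) + 1) = ((k.factorial : ℝ))⁻¹ := by
      rw [Nat.factorial_succ, Nat.cast_mul]
      have h1 : (k.factorial : ℝ) ≠ 0 := Nat.cast_ne_zero.mpr k.factorial_ne_zero
      have h2 : ((k : ℝ) + 1) ≠ 0 := by positivity
      field_simp
      push_cast
      ring
    rw [Nat.succ_sub_one]
    push_cast
    rw [← this]
    ring
  rw [step]
  rw [PowerSeries.coeff_mul]
  have expand : ∀ p ∈ Finset.HasAntidiagonal.antidiagonal n,
      (PowerSeries.coeff p.1) BB * (PowerSeries.coeff p.2) (d⁄dX ℝ LP)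
      = ∑ m ∈ Finset.range (n + 1), ((m.factorial : ℝ))⁻¹ *
          ((PowerSeries.coeff p.1) (LP ^ m) * (PowerSeries.coeff p.2) (d⁄dX ℝ LP)) := by
    intro p hp
    have hp1 : p.1 ≤ n := Finset.HasAntidiagonal.antidiagonal.fst_le hp
    rw [coeff_BB, aa_eq p.1 (n+1) (by omega), Finset.sum_mul]
    refine Finset.sum_congr rfl fun m _ => by ring
  rw [Finset.sum_congr rfl expand, Finset.sum_comm]
  refine Finset.sum_congr rfl fun k _ => ?_
  rw [PowerSeries.coeff_mul, Finset.mul_sum]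

lemma BB_eq : (1 + X : PowerSeries ℝ) * d⁄dX ℝ BB = BB := by
  rw [derivative_BB, ← mul_assoc, mul_comm ((1 + X : PowerSeries ℝ)) BB, mul_assoc,
    one_add_X_mul_dLP, mul_one]

lemma aa_zero : aa 0 = 1 := by
  rw [aa]
  simp

lemma aa_recur (n : ℕ) : aa (n + 1) * ((n : ℝ) + 1) + (if n = 0 then 0 else aa n * n) = aa n := by
  have h := congrArg (PowerSeries.coeff n) BB_eq
  rw [add_mul, one_mul, map_add] at h
  cases n with
  | zero =>
    rw [coeff_zero_X_mul, coeff_derivative, coeff_BB, coeff_BB] at h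
    rw [if_pos rfl]
    simpa using h
  | succ n =>
    rw [coeff_succ_X_mul, coeff_derivative, coeff_derivative,
      coeff_BB, coeff_BB] at h
    rw [if_neg (by omega : ¬ (n + 1 = 0))]
    push_cast
    push_cast at h
    linarith [h]

lemma aa_one : aa 1 = 1 := by
  have h := aa_recur 0
  rw [if_pos rfl, aa_zero] at h
  norm_num at h
  exact h

lemma aa_two_add (n : ℕ) : aa (n + 2) = 0 := by
  induction n with
  | zero =>
    have h := aa_recur 1
    rw [if_neg one_ne_zero, aa_one] at h
    norm_num at h
    linarith
  | succ n ih =>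
    have h := aa_recur (n + 2)
    rw [if_neg (by omega : ¬ (n + 2 = 0)), ih, zero_mul, add_zero] at h
    show aa (n + 3) = 0
    rcases mul_eq_zero.mp h with h' | h'
    · exact h'
    · exfalso
      have : ((n + 2 : ℕ) : ℝ) + 1 > 0 := by positivity
      rw [h'] at this
      exact lt_irrefl 0 this

end Sec6

section Sec7
open HahnSeries.SummableFamily

/-- Evaluation family of a power series at a Hahn series of positive order. -/
noncomputable def psFamily (f : PowerSeries ℝ) (t : F) (ht : 0 < t.orderTop) :
    SummableFamily ℝ ℝ ℕ where
  toFun n := (PowerSeries.coeff n f) • t ^ n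
  isPWO_iUnion_support' := by
    refine (SummableFamily.powers t).isPWO_iUnion_support.mono ?_
    intro g hg
    obtain ⟨n, hn⟩ := Set.mem_iUnion.mp hg
    refine Set.mem_iUnion.mpr ⟨n, ?_⟩
    have hn' : ((PowerSeries.coeff n f) • t ^ n).coeff g ≠ 0 := hn
    intro h
    have h' : (t ^ n).coeff g = 0 := by rwa [SummableFamily.powers_of_orderTop_pos ht n] at h
    exact hn' (by rw [HahnSeries.coeff_smul, h', smul_zero])
  finite_co_support' g := by
    refine ((SummableFamily.powers t).finite_co_support g).subset ?_
    intro n hn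
    simp only [Set.mem_setOf_eq] at hn ⊢
    intro h
    apply hn
    have h' : (t ^ n).coeff g = 0 := by simp only [] at h; rwa [SummableFamily.powers_of_orderTop_pos ht n] at h
    rw [HahnSeries.coeff_smul, h', smul_zero]

lemma psFamily_apply (f : PowerSeries ℝ) (t : F) (ht : 0 < t.orderTop) (n : ℕ) :
    psFamily f t ht n = (PowerSeries.coeff n f) • t ^ n := rfl

/-- Evaluation of a power series at a Hahn series of positive order. -/
noncomputable def ev (f : PowerSeries ℝ) (t : F) (ht : 0 < t.orderTop) : F :=
  (psFamily f t ht).hsum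

lemma ev_coeff (f : PowerSeries ℝ) (t : F) (ht : 0 < t.orderTop) (g : ℝ) :
    (ev f t ht).coeff g = ∑ᶠ n : ℕ, (PowerSeries.coeff n f) * (t ^ n).coeff g := by
  rw [ev, SummableFamily.coeff_hsum]
  exact finsum_congr fun n => by rw [psFamily_apply, HahnSeries.coeff_smul, smul_eq_mul]

lemma ev_add (f g : PowerSeries ℝ) (t : F) (ht : 0 < t.orderTop) :
    ev (f + g) t ht = ev f t ht + ev g t ht := by
  rw [ev, ev, ev, ← SummableFamily.hsum_add]
  congr 1
  apply SummableFamily.ext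
  intro n
  rw [SummableFamily.add_apply, psFamily_apply, psFamily_apply, psFamily_apply, map_add]
  exact add_smul _ _ _

lemma ev_one (t : F) (ht : 0 < t.orderTop) : ev 1 t ht = 1 := by
  ext g
  rw [ev_coeff]
  rw [finsum_eq_single _ 0 (fun n hn => ?_)]
  · simp
  · rw [PowerSeries.coeff_one, if_neg hn, zero_mul]

lemma ev_X (t : F) (ht : 0 < t.orderTop) : ev PowerSeries.X t ht = t := by
  ext g
  rw [ev_coeff]
  rw [finsum_eq_single _ 1 (fun n hn => ?_)]
  · simp
  · rw [PowerSeries.coeff_X, if_neg hn, zero_mul]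

lemma ev_mul (f g : PowerSeries ℝ) (t : F) (ht : 0 < t.orderTop) :
    ev (f * g) t ht = ev f t ht * ev g t ht := by
  have key : sumAntidiag (SummableFamily.smul (psFamily f t ht) (psFamily g t ht))
      = psFamily (f * g) t ht := by
    apply SummableFamily.ext
    intro n
    rw [sumAntidiag_apply, psFamily_apply]
    have hterm : ∀ p ∈ Finset.HasAntidiagonal.antidiagonal n,
        (SummableFamily.smul (psFamily f t ht) (psFamily g t ht)) p
          = ((PowerSeries.coeff p.1 f) * (PowerSeries.coeff p.2 g)) • t ^ n := by
      intro p hp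
      show (HahnModule.of ℝ).symm ((psFamily f t ht p.1) •
        HahnModule.of ℝ (psFamily g t ht p.2)) = _
      rw [HahnSeries.of_symm_smul_of_eq_mul, psFamily_apply, psFamily_apply, smul_mul_smul',
        ← _root_.pow_add, Finset.HasAntidiagonal.mem_antidiagonal.mp hp]
    rw [Finset.sum_congr rfl hterm, ← Finset.sum_smul, PowerSeries.coeff_mul]
  have h1 : ev f t ht * ev g t ht
      = (SummableFamily.smul (psFamily f t ht) (psFamily g t ht)).hsum := by
    rw [ev, ev, SummableFamily.smul_hsum, HahnSeries.of_symm_smul_of_eq_mul]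
  rw [h1, ← hsum_sumAntidiag, key, ev]

lemma ev_pow (f : PowerSeries ℝ) (m : ℕ) (t : F) (ht : 0 < t.orderTop) :
    ev (f ^ m) t ht = (ev f t ht) ^ m := by
  induction m with
  | zero => rw [pow_zero, pow_zero, ev_one]
  | succ m ih => rw [pow_succ, pow_succ, ev_mul, ih]

lemma ev_orderTop_pos {f : PowerSeries ℝ} (hf : PowerSeries.constantCoeff f = 0)
    (t : F) (ht : 0 < t.orderTop) : 0 < (ev f t ht).orderTop := by
  rw [orderTop_pos_iff]
  intro g hg
  rw [ev_coeff]
  have : ∀ n : ℕ, (PowerSeries.coeff n f) * (t ^ n).coeff g = 0 := by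
    intro n
    rcases Nat.eq_zero_or_pos n with h0 | hpos
    · subst h0
      rw [PowerSeries.coeff_zero_eq_constantCoeff, hf, zero_mul]
    · rw [orderTop_pos_iff.mp (orderTop_pos_pow ht hpos) g hg, mul_zero]
  rw [finsum_congr this, finsum_zero]

lemma BB_val : BB = 1 + PowerSeries.X := by
  ext n
  rw [coeff_BB, map_add, PowerSeries.coeff_one, PowerSeries.coeff_X]
  match n with
  | 0 => rw [aa_zero]; norm_num
  | 1 => rw [aa_one]; norm_num
  | (n+2) =>
    rw [aa_two_add]
    simp [show ¬ (n+2=0) by omega, show ¬ (n+2=1) by omega]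

theorem exists_log {t : F} (ht : 0 < t.orderTop) : ∃ s : F, 0 < s.orderTop ∧ E s = 1 + t := by
  classical
  set s : F := ev LP t ht with hs_def
  have hs : 0 < s.orderTop := ev_orderTop_pos constantCoeff_LP t ht
  refine ⟨s, hs, ?_⟩
  have main : E s = ev BB t ht := by
    ext g
    set N : Finset ℕ := ((SummableFamily.powers t).finite_co_support g).toFinset with hN
    have hNmem : ∀ n : ℕ, (t ^ n).coeff g ≠ 0 → n ∈ N := by
      intro n hn
      rw [hN]; refine (Set.Finite.mem_toFinset _).mpr ?_
      show ((SummableFamily.powers t) n).coeff g ≠ 0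
      rw [SummableFamily.powers_of_orderTop_pos ht n]
      exact hn
    set M : ℕ := N.sup id + 1 with hM
    have hnM : ∀ n ∈ N, n < M := fun n hn =>
      Nat.lt_succ_of_le (Finset.le_sup (f := id) hn)
    have inner : ∀ m : ℕ, (ev (LP ^ m) t ht).coeff g
        = ∑ n ∈ N, (PowerSeries.coeff n (LP ^ m)) * (t ^ n).coeff g := by
      intro m
      rw [ev_coeff]
      refine finsum_eq_finset_sum_of_support_subset _ ?_
      intro n hn
      rw [Function.mem_support] at hn
      have : (t ^ n).coeff g ≠ 0 := fun h => hn (by rw [h, mul_zero])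
      exact hNmem n this
    have lhs_eq : (E s).coeff g = ∑ m ∈ Finset.range M,
        ((m.factorial : ℝ))⁻¹ * ∑ n ∈ N, (PowerSeries.coeff n (LP ^ m)) * (t ^ n).coeff g := by
      rw [E_coeff s hs]
      have hrw : ∀ m : ℕ, ((m.factorial : ℝ))⁻¹ * (s ^ m).coeff g
          = ((m.factorial : ℝ))⁻¹ * ∑ n ∈ N, (PowerSeries.coeff n (LP ^ m)) * (t ^ n).coeff g := by
        intro m
        rw [hs_def, ← ev_pow, inner]
      rw [finsum_congr hrw]
      refine finsum_eq_finset_sum_of_support_subset _ ?_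
      intro m hm
      rw [Function.mem_support] at hm
      have : ∑ n ∈ N, (PowerSeries.coeff n (LP ^ m)) * (t ^ n).coeff g ≠ 0 :=
        fun h => hm (by rw [h, mul_zero])
      obtain ⟨n, hn, hne⟩ := Finset.exists_ne_zero_of_sum_ne_zero this
      have hcoeff : (PowerSeries.coeff n) (LP ^ m) ≠ 0 := fun h => hne (by rw [h, zero_mul])
      have : ¬ (n < m) := fun hlt => hcoeff (coeff_LP_pow hlt)
      have : m ≤ n := le_of_not_gt this
      exact Finset.mem_coe.mpr (Finset.mem_range.mpr (lt_of_le_of_lt this (hnM n hn)))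
    have rhs_eq : (ev BB t ht).coeff g = ∑ n ∈ N,
        (∑ m ∈ Finset.range M, ((m.factorial : ℝ))⁻¹ * (PowerSeries.coeff n (LP ^ m)))
          * (t ^ n).coeff g := by
      rw [ev_coeff]
      have hsupp : (Function.support fun n : ℕ =>
          (PowerSeries.coeff n BB) * (t ^ n).coeff g) ⊆ ↑N := by
        intro n hn
        rw [Function.mem_support] at hn
        exact hNmem n (fun h => hn (by rw [h, mul_zero]))
      rw [finsum_eq_finset_sum_of_support_subset _ hsupp]
      refine Finset.sum_congr rfl fun n hn => ?_
      rw [coeff_BB, aa_eq n M (hnM n hn)]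
    rw [lhs_eq, rhs_eq]
    have l1 : ∀ m : ℕ, ((m.factorial : ℝ))⁻¹ *
          ∑ n ∈ N, (PowerSeries.coeff n) (LP ^ m) * (t ^ n).coeff g
        = ∑ n ∈ N, ((m.factorial : ℝ))⁻¹ *
            ((PowerSeries.coeff n) (LP ^ m) * (t ^ n).coeff g) :=
      fun m => Finset.mul_sum _ _ _
    have r1 : ∀ n : ℕ, (∑ m ∈ Finset.range M,
          ((m.factorial : ℝ))⁻¹ * (PowerSeries.coeff n) (LP ^ m)) * (t ^ n).coeff g
        = ∑ m ∈ Finset.range M,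
            ((m.factorial : ℝ))⁻¹ * (PowerSeries.coeff n) (LP ^ m) * (t ^ n).coeff g :=
      fun n => Finset.sum_mul _ _ _
    rw [Finset.sum_congr rfl (fun m _ => l1 m), Finset.sum_congr rfl (fun n _ => r1 n),
      Finset.sum_comm]
    exact Finset.sum_congr rfl fun n _ => Finset.sum_congr rfl fun m _ => by ring
  rw [main, BB_val, ev_add, ev_one, ev_X]

end Sec7

section Sec8
open Real

lemma single_add' (g : ℝ) (x y : ℝ) :
    HahnSeries.single g (x + y) = HahnSeries.single g x + HahnSeries.single g y := by
  ext b
  by_cases hb : b = g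
  · subst hb; simp [HahnSeries.coeff_single_same]
  · simp [HahnSeries.coeff_single_of_ne hb]

lemma coeff_neg_of_nonneg {a : F} (ha : 0 ≤ a.orderTop) {g : ℝ} (hg : g < 0) : a.coeff g = 0 :=
  orderTop_nonneg_iff.mp ha g hg

lemma aprime_pos {a : F} (ha : 0 ≤ a.orderTop) :
    0 < (a - HahnSeries.single (0 : ℝ) (a.coeff 0)).orderTop := by
  rw [orderTop_pos_iff]
  intro g hg
  rcases lt_or_eq_of_le hg with hlt | heq
  · rw [HahnSeries.coeff_sub, coeff_neg_of_nonneg ha hlt,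
      HahnSeries.coeff_single_of_ne (ne_of_lt hlt), sub_zero]
  · subst heq
    rw [HahnSeries.coeff_sub, HahnSeries.coeff_single_same, sub_self]

lemma expO_eq_smul (a : F) :
    expO a = Real.exp (a.coeff 0) • E (a - HahnSeries.single (0 : ℝ) (a.coeff 0)) := by
  rw [expO, HahnSeries.single_zero_mul_eq_smul]

lemma expO_struct {a : F} (ha : 0 ≤ a.orderTop) :
    expO a ≠ 0 ∧ (expO a).order = 0 ∧ (expO a).leadingCoeff = Real.exp (a.coeff 0)
      ∧ (expO a).coeff 0 = Real.exp (a.coeff 0) := by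
  have hpos := aprime_pos ha
  have h0 : (expO a).coeff 0 = Real.exp (a.coeff 0) := by
    rw [expO_eq_smul, HahnSeries.coeff_smul, E_coeff_zero _ hpos, smul_eq_mul, mul_one]
  have hneg : ∀ g < 0, (expO a).coeff g = 0 := by
    intro g hg
    rw [expO_eq_smul, HahnSeries.coeff_smul, E_coeff_neg _ hpos hg, smul_zero]
  have h := unit_struct (x := expO a) (by rw [h0]; exact (Real.exp_pos _).ne') hneg
  exact ⟨h.1, h.2.1, by rw [h.2.2, h0], h0⟩

lemma expO_memUplus {a : F} (ha : 0 ≤ a.orderTop) : memUplus (expO a) := by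
  obtain ⟨h1, h2, h3, _⟩ := expO_struct ha
  exact ⟨h1, h2, by rw [h3]; exact Real.exp_pos _⟩

lemma expO_orderTop_nonneg {a : F} (ha : 0 ≤ a.orderTop) : 0 ≤ (expO a).orderTop := by
  obtain ⟨h1, h2, _, _⟩ := expO_struct ha
  rw [← HahnSeries.order_eq_orderTop_of_ne_zero h1, h2]
  exact le_refl (0 : WithTop ℝ)

lemma expO_add {a b : F} (ha : 0 ≤ a.orderTop) (hb : 0 ≤ b.orderTop) :
    expO (a + b) = expO a * expO b := by
  have hpa := aprime_pos ha
  have hpb := aprime_pos hb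
  have hco : (a + b).coeff 0 = a.coeff 0 + b.coeff 0 := HahnSeries.coeff_add
  have hsplit : (a + b) - HahnSeries.single (0 : ℝ) ((a + b).coeff 0)
      = (a - HahnSeries.single (0 : ℝ) (a.coeff 0))
        + (b - HahnSeries.single (0 : ℝ) (b.coeff 0)) := by
    rw [hco, single_add']
    ring
  rw [expO_eq_smul, expO_eq_smul, expO_eq_smul, smul_mul_smul', E_mul hpa hpb, hsplit, hco,
    Real.exp_add]

lemma expO_inj {a b : F} (ha : 0 ≤ a.orderTop) (hb : 0 ≤ b.orderTop)
    (h : expO a = expO b) : a = b := by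
  have h0 : Real.exp (a.coeff 0) = Real.exp (b.coeff 0) := by
    rw [← (expO_struct ha).2.2.2, ← (expO_struct hb).2.2.2, h]
  have hc0 : a.coeff 0 = b.coeff 0 := Real.exp_injective h0
  have hE : E (a - HahnSeries.single (0 : ℝ) (a.coeff 0))
      = E (b - HahnSeries.single (0 : ℝ) (b.coeff 0)) := by
    have h' := h
    rw [expO_eq_smul, expO_eq_smul, ← h0] at h'
    have hne : Real.exp (a.coeff 0) ≠ 0 := (Real.exp_pos _).ne'
    have := congrArg (fun z => (Real.exp (a.coeff 0))⁻¹ • z) h'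
    simpa [smul_smul, inv_mul_cancel₀ hne] using this
  have := E_inj (aprime_pos ha) (aprime_pos hb) hE
  have h2 : a - HahnSeries.single (0 : ℝ) (a.coeff 0)
      = b - HahnSeries.single (0 : ℝ) (b.coeff 0) := this
  rw [hc0] at h2
  have := congrArg (fun z => z + HahnSeries.single (0 : ℝ) (b.coeff 0)) h2
  simpa [sub_add_cancel] using this

lemma expO_surj {u : F} (hu : memUplus u) : ∃ a : F, 0 ≤ a.orderTop ∧ expO a = u := by
  obtain ⟨hu0, huo, hulc⟩ := hu
  set c : ℝ := u.leadingCoeff with hc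
  have hcpos : 0 < c := hulc
  have hcne : c ≠ 0 := hcpos.ne'
  have hu00 : u.coeff 0 = c := by rw [hc, HahnSeries.leadingCoeff_eq, huo]
  have huneg : ∀ g < 0, u.coeff g = 0 := by
    intro g hg
    refine HahnSeries.coeff_eq_zero_of_lt_orderTop ?_
    rw [← HahnSeries.order_eq_orderTop_of_ne_zero hu0, huo]
    exact_mod_cast hg
  set w : F := c⁻¹ • u with hw
  have hw0 : w.coeff 0 = 1 := by
    rw [hw, HahnSeries.coeff_smul, hu00, smul_eq_mul, inv_mul_cancel₀ hcne]
  have hwneg : ∀ g < 0, w.coeff g = 0 := by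
    intro g hg
    rw [hw, HahnSeries.coeff_smul, huneg g hg, smul_zero]
  have ht : 0 < (w - 1).orderTop := by
    rw [orderTop_pos_iff]
    intro g hg
    rcases lt_or_eq_of_le hg with hlt | heq
    · rw [HahnSeries.coeff_sub, hwneg g hlt, HahnSeries.coeff_one, if_neg hlt.ne, sub_zero]
    · subst heq
      rw [HahnSeries.coeff_sub, hw0, HahnSeries.coeff_one, if_pos rfl, sub_self]
  obtain ⟨s, hs, hEs⟩ := exists_log ht
  have hEw : E s = w := by rw [hEs]; ring
  have hs0 : s.coeff 0 = 0 := orderTop_pos_iff.mp hs 0 le_rfl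
  refine ⟨HahnSeries.single (0 : ℝ) (Real.log c) + s, ?_, ?_⟩
  · rw [orderTop_nonneg_iff]
    intro g hg
    rw [HahnSeries.coeff_add, HahnSeries.coeff_single_of_ne hg.ne,
      orderTop_pos_iff.mp hs g hg.le, add_zero]
  · have ha0 : (HahnSeries.single (0 : ℝ) (Real.log c) + s).coeff 0 = Real.log c := by
      rw [HahnSeries.coeff_add, HahnSeries.coeff_single_same, hs0, add_zero]
    rw [expO_eq_smul, ha0]
    have haprime : (HahnSeries.single (0 : ℝ) (Real.log c) + s)
        - HahnSeries.single (0 : ℝ) (Real.log c) = s := by ring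
    rw [haprime, hEw, Real.exp_log hcpos, hw, smul_smul, mul_inv_cancel₀ hcne, one_smul]

lemma logO_spec {u : F} (hu : memUplus u) :
    0 ≤ (logO u).orderTop ∧ expO (logO u) = u := by
  have hex : ∃ a ∈ {a : F | 0 ≤ a.orderTop}, expO a = u := by
    obtain ⟨a, ha, hae⟩ := expO_surj hu
    exact ⟨a, ha, hae⟩
  exact ⟨Function.invFunOn_mem hex, Function.invFunOn_eq hex⟩

lemma leadingCoeff_mul' {x y : F} (hx : x ≠ 0) (hy : y ≠ 0) :
    (x * y).leadingCoeff = x.leadingCoeff * y.leadingCoeff := by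
  have hxy : x * y ≠ 0 := mul_ne_zero hx hy
  rw [HahnSeries.leadingCoeff_eq, HahnSeries.order_mul hx hy,
    HahnSeries.coeff_mul_order_add_order]

lemma memUplus_mul {u v : F} (hu : memUplus u) (hv : memUplus v) : memUplus (u * v) := by
  obtain ⟨hu0, huo, hulc⟩ := hu
  obtain ⟨hv0, hvo, hvlc⟩ := hv
  refine ⟨mul_ne_zero hu0 hv0, ?_, ?_⟩
  · rw [HahnSeries.order_mul hu0 hv0, huo, hvo, add_zero]
  · rw [leadingCoeff_mul' hu0 hv0]
    exact mul_pos hulc hvlc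

lemma logO_add {u v : F} (hu : memUplus u) (hv : memUplus v) :
    logO (u * v) = logO u + logO v := by
  have huv := memUplus_mul hu hv
  refine expO_inj (logO_spec huv).1 ?_ ?_
  · rw [orderTop_nonneg_iff]
    intro g hg
    rw [HahnSeries.coeff_add, coeff_neg_of_nonneg (logO_spec hu).1 hg,
      coeff_neg_of_nonneg (logO_spec hv).1 hg, add_zero]
  · rw [(logO_spec huv).2, expO_add (logO_spec hu).1 (logO_spec hv).1,
      (logO_spec hu).2, (logO_spec hv).2]

lemma orderTop_nonneg_add {a b : F} (ha : 0 ≤ a.orderTop) (hb : 0 ≤ b.orderTop) :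
    0 ≤ (a + b).orderTop := by
  rw [orderTop_nonneg_iff]
  intro g hg
  rw [HahnSeries.coeff_add, coeff_neg_of_nonneg ha hg, coeff_neg_of_nonneg hb hg, add_zero]

lemma single_orderTop_nonneg (γ : ℝ) : 0 ≤ (HahnSeries.single (0 : ℝ) γ).orderTop := by
  rw [orderTop_nonneg_iff]
  intro g hg
  exact HahnSeries.coeff_single_of_ne hg.ne

lemma hpow_memUplus {u : F} (hu : memUplus u) (γ : ℝ) :
    memUplus (hpow u (HahnSeries.single (0 : ℝ) γ)) := by
  rw [hpow]
  exact expO_memUplus (orderTop_nonneg_mul (single_orderTop_nonneg γ) (logO_spec hu).1)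

lemma hpow_mul_base {u v : F} (hu : memUplus u) (hv : memUplus v) (γ : ℝ) :
    hpow (u * v) (HahnSeries.single (0 : ℝ) γ)
      = hpow u (HahnSeries.single (0 : ℝ) γ) * hpow v (HahnSeries.single (0 : ℝ) γ) := by
  rw [hpow, hpow, hpow, logO_add hu hv, mul_add]
  exact expO_add (orderTop_nonneg_mul (single_orderTop_nonneg γ) (logO_spec hu).1)
    (orderTop_nonneg_mul (single_orderTop_nonneg γ) (logO_spec hv).1)

end Sec8

section Sec9

lemma vv_eq_exp {a : F} (hlc : 0 < a.leadingCoeff) : vv a = Real.exp (-a.order) := by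
  rw [vv, Real.sign_of_pos hlc, one_mul]

lemma vv_pos {a : F} (hlc : 0 < a.leadingCoeff) : 0 < vv a := by
  rw [vv_eq_exp hlc]; exact Real.exp_pos _

lemma diagPi_pos {r : ℝ} (hr : 0 < r) : diagPi r = HahnSeries.single (-Real.log r) r := by
  rw [diagPi, abs_of_pos hr]

lemma diagPi_vv {a : F} (hlc : 0 < a.leadingCoeff) :
    diagPi (vv a) = HahnSeries.single a.order (vv a) := by
  rw [diagPi_pos (vv_pos hlc), vv_eq_exp hlc, Real.log_exp, neg_neg]

lemma single_inv (g : ℝ) {r : ℝ} (hr : r ≠ 0) :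
    (HahnSeries.single g r : F)⁻¹ = HahnSeries.single (-g) r⁻¹ := by
  refine inv_eq_of_mul_eq_one_right ?_
  rw [HahnSeries.single_mul_single, add_neg_cancel, mul_inv_cancel₀ hr,
    HahnSeries.single_zero_one]

lemma uplus_div {a : F} (ha : a ≠ 0) (hlc : 0 < a.leadingCoeff) :
    memUplus (a / diagPi (vv a)) := by
  have hv := vv_pos hlc
  have hvne : vv a ≠ 0 := hv.ne'
  have hsne : (HahnSeries.single (-a.order) (vv a)⁻¹ : F) ≠ 0 :=
    HahnSeries.single_ne_zero (inv_ne_zero hvne)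
  rw [div_eq_mul_inv, diagPi_vv hlc, single_inv _ hvne]
  refine ⟨mul_ne_zero ha hsne, ?_, ?_⟩
  · rw [HahnSeries.order_mul ha hsne, HahnSeries.order_single (inv_ne_zero hvne), add_neg_cancel]
  · rw [leadingCoeff_mul' ha hsne, HahnSeries.leadingCoeff_of_single]
    exact mul_pos hlc (inv_pos.mpr hv)

lemma vv_mul {a b : F} (ha : a ≠ 0) (hlca : 0 < a.leadingCoeff)
    (hb : b ≠ 0) (hlcb : 0 < b.leadingCoeff) : vv (a * b) = vv a * vv b := by
  have hlcab : 0 < (a * b).leadingCoeff := by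
    rw [leadingCoeff_mul' ha hb]; exact mul_pos hlca hlcb
  rw [vv_eq_exp hlcab, vv_eq_exp hlca, vv_eq_exp hlcb, HahnSeries.order_mul ha hb, neg_add,
    Real.exp_add]

lemma diagPi_mul {r s : ℝ} (hr : 0 < r) (hs : 0 < s) :
    diagPi (r * s) = diagPi r * diagPi s := by
  rw [diagPi_pos (mul_pos hr hs), diagPi_pos hr, diagPi_pos hs, HahnSeries.single_mul_single]
  congr 1
  rw [Real.log_mul hr.ne' hs.ne', neg_add]

lemma vv_tp {a : F} (ha : a ≠ 0) (hlc : 0 < a.leadingCoeff) (γ : ℝ) :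
    vv (tp a γ) = (vv a) ^ γ := by
  set r : ℝ := (vv a) ^ γ with hrdef
  have hr : 0 < r := Real.rpow_pos_of_pos (vv_pos hlc) γ
  have hmem := hpow_memUplus (uplus_div ha hlc) γ
  obtain ⟨hh0, hho, hhlc⟩ := hmem
  have hsne : (HahnSeries.single (-Real.log r) r : F) ≠ 0 := HahnSeries.single_ne_zero hr.ne'
  have htp : tp a γ = HahnSeries.single (-Real.log r) r
      * hpow (a / diagPi (vv a)) (HahnSeries.single (0 : ℝ) γ) := by
    rw [tp, diagPi_pos hr]
  have hne : tp a γ ≠ 0 := by rw [htp]; exact mul_ne_zero hsne hh0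
  have hord : (tp a γ).order = -Real.log r := by
    rw [htp, HahnSeries.order_mul hsne hh0, HahnSeries.order_single hr.ne', hho, add_zero]
  have hlc' : (tp a γ).leadingCoeff = r * (hpow (a / diagPi (vv a))
      (HahnSeries.single (0 : ℝ) γ)).leadingCoeff := by
    rw [htp, leadingCoeff_mul' hsne hh0, HahnSeries.leadingCoeff_of_single]
  have hlcpos : 0 < (tp a γ).leadingCoeff := by
    rw [hlc']; exact mul_pos hr hhlc
  rw [vv_eq_exp hlcpos, hord, neg_neg, Real.exp_log hr]

lemma tp_mul {a b : F} (ha : a ≠ 0) (hlca : 0 < a.leadingCoeff)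
    (hb : b ≠ 0) (hlcb : 0 < b.leadingCoeff) (γ : ℝ) :
    tp (a * b) γ = tp a γ * tp b γ := by
  have hva := vv_pos hlca
  have hvb := vv_pos hlcb
  have hsplit : (a * b) / diagPi (vv (a * b)) = (a / diagPi (vv a)) * (b / diagPi (vv b)) := by
    rw [vv_mul ha hlca hb hlcb, diagPi_mul hva hvb, div_mul_div_comm]
  rw [tp, tp, tp, hsplit, hpow_mul_base (uplus_div ha hlca) (uplus_div hb hlcb) γ,
    vv_mul ha hlca hb hlcb, Real.mul_rpow hva.le hvb.le,
    diagPi_mul (Real.rpow_pos_of_pos hva γ) (Real.rpow_pos_of_pos hvb γ), mul_mul_mul_comm]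

end Sec9

theorem stmt_12 :
    -- for `a ∈ F⁺`, the element `a / π (vv a)` lies in `U⁺`,
    -- so the tempered power `tp` is well defined
    (∀ a : HahnSeries ℝ ℝ, a ≠ 0 → 0 < a.leadingCoeff →
      memUplus (a / diagPi (vv a))) ∧
    -- `tp` is multiplicative in the base and `vv (tp a γ) = (vv a) ^ γ`
    (∀ a b : HahnSeries ℝ ℝ, a ≠ 0 → 0 < a.leadingCoeff →
      b ≠ 0 → 0 < b.leadingCoeff → ∀ γ : ℝ,
      tp (a * b) γ = tp a γ * tp b γ ∧ vv (tp a γ) = (vv a) ^ γ) := by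
  exact ⟨fun _ ha hlc => uplus_div ha hlc,
    fun _ _ ha hlca hb hlcb γ => ⟨tp_mul ha hlca hb hlcb γ, vv_tp ha hlca γ⟩⟩
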